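/- Let c ∈ B(T), R_c = Σ_{n≥0}(cα)^n(α*c*)^n, and L_c := α(R_c − R_c α* c* R_c^{-1} c α R_c)α*. Then L_c > 0, L_c^{-1} = c*c + α R_c^{-1} α* = I + c*c − αcL_c c*α*, and cL_c = R_c^{-1} c α R_c α*. -/

import Mathlib

open scoped InnerProductSpace ENNReal
open ContinuousLinearMap (adjoint)

noncomputable section

namespace Multiscale

/-- A homogeneous tree of order `q` with a distinguished boundary point `∞`,
encoded by the `q` primitive shift maps (the right action `t ↦ t·αⱼ`, giving the
`q` successors of a node) together with the parent map (the first step of the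
unique path from a node towards the boundary point `∞`).  The axioms say:
the shifts are jointly injective, `t·αⱼ` has parent `t`, every node is a
successor of its parent, the parent map has no cycles (acyclicity of the tree)
and the paths from any two nodes to `∞` eventually merge (connectedness and the
choice of one common boundary point). -/
structure HomTree (q : ℕ) (T : Type) where
  shift : Fin q → T → T
  parent : T → T
  shift_inj : ∀ i j s t, shift i s = shift j t → i = j ∧ s = t
  parent_shift : ∀ j t, parent (shift j t) = t
  shift_parent : ∀ t, ∃ j, shift j (parent t) = t
  acyclic : ∀ t n, parent^[n] t = t → n = 0
  connected : ∀ s t, ∃ m n, parent^[m] s = parent^[n] t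

variable {q : ℕ} {T : Type} [DecidableEq T]

/-- The partial order `s ⪯ t` induced by the boundary point:
`dist(s, s ∧ t) ≤ dist(t, s ∧ t)`. -/
def HomTree.ple (S : HomTree q T) (s t : T) : Prop :=
  ∃ m n, m ≤ n ∧ S.parent^[m] s = S.parent^[n] t

/-- The horocycle equivalence `s ≍ t` : `dist(s, s ∧ t) = dist(t, s ∧ t)`. -/
def HomTree.horo (S : HomTree q T) (s t : T) : Prop :=
  ∃ n, S.parent^[n] s = S.parent^[n] t

/-- The right action `t ↦ t·w` of a word `w ∈ F_q` on the tree. -/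
def HomTree.act (S : HomTree q T) : List (Fin q) → T → T
  | [], t => t
  | i :: w, t => S.act w (S.shift i t)

/-- `ℓ²(T)`. -/
abbrev L2 (T : Type) : Type := lp (fun _ : T => ℂ) 2

/-- The operator on `ℓ²` associated with a word `w ∈ F_q`, built from the
operators of the primitive shifts: `(w f)(t) = f(t·w)`. -/
def wordOp {q : ℕ} {H : Type} [NormedAddCommGroup H] [NormedSpace ℂ H]
    (A : Fin q → (H →L[ℂ] H)) : List (Fin q) → (H →L[ℂ] H)
  | [] => 1
  | i :: w => A i ∘L wordOp A w

/-- A bounded operator on `ℓ²(T)` is causal if whenever `f` vanishes on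
`{t : t ⪯ s}` so does `Xf`. -/
def Causal (S : HomTree q T) (X : L2 T →L[ℂ] L2 T) : Prop :=
  ∀ s : T, ∀ f : L2 T, (∀ t, S.ple t s → f t = 0) → ∀ t, S.ple t s → X f t = 0

/-- A constant: both `X` and `X*` are causal. -/
def IsConst (S : HomTree q T) (X : L2 T →L[ℂ] L2 T) : Prop :=
  Causal S X ∧ Causal S (adjoint X)

/-- Diagonal with respect to the standard basis `χ_t`. -/
def IsDiagonal (X : L2 T →L[ℂ] L2 T) : Prop :=
  ∀ t : T, ∃ a : ℂ, X (lp.single 2 t 1) = a • lp.single 2 t 1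

/-- A pair of words of `F_q` is irreducible if it is not of the form
`(αᵢ v₁, αᵢ v₂)`. -/
def Irred {q : ℕ} (w₁ w₂ : List (Fin q)) : Prop :=
  ¬ ∃ (i : Fin q) (v₁ v₂ : List (Fin q)), w₁ = i :: v₁ ∧ w₂ = i :: v₂

/-- Membership in the Hilbert--Schmidt class: `trace (X*X) = Σ_t ‖X χ_t‖² < ∞`. -/
def HSSummable (X : L2 T →L[ℂ] L2 T) : Prop :=
  Summable fun t : T => ‖X (lp.single 2 t 1)‖ ^ 2

/-- The Hilbert--Schmidt norm `‖X‖₂ = (trace (X*X))^{1/2}`. -/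
def hsNorm (X : L2 T →L[ℂ] L2 T) : ℝ :=
  Real.sqrt (∑' t : T, ‖X (lp.single 2 t 1)‖ ^ 2)

/-- The Hilbert--Schmidt inner product `⟨X, Y⟩₂ = trace (Y* X)`
(linear in `X`, conjugate-linear in `Y`). -/
def hsInner (X Y : L2 T →L[ℂ] L2 T) : ℂ :=
  ∑' t : T, ⟪Y (lp.single 2 t 1), X (lp.single 2 t 1)⟫_ℂ


/-- `ℓ²(T)^q` with the Hilbert space structure. -/
abbrev L2q (q : ℕ) (T : Type) : Type := PiLp 2 (fun _ : Fin q => L2 T)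

instance {q : ℕ} {T : Type} : CompleteSpace (L2q q T) :=
  inferInstance

set_option maxHeartbeats 4000000 in
private lemma aux_Lc {H K : Type} [NormedAddCommGroup H] [InnerProductSpace ℂ H]
    [CompleteSpace H] [NormedAddCommGroup K] [InnerProductSpace ℂ K] [CompleteSpace K]
    (Al : H →L[ℂ] K) (cr : K →L[ℂ] H) (R Rinv : H →L[ℂ] H)
    (hAlU₁ : Al ∘L adjoint Al = 1) (hAlU₂ : adjoint Al ∘L Al = 1)
    (hRid : R = 1 + cr ∘L (Al ∘L R ∘L adjoint Al) ∘L adjoint cr)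
    (hRsa : star R = R)
    (hRgeI : (R - 1).IsPositive)
    (hRinv₁ : R ∘L Rinv = 1) (hRinv₂ : Rinv ∘L R = 1) :
    ∃ Linv : K →L[ℂ] K,
      (Al ∘L (R - R ∘L adjoint Al ∘L adjoint cr ∘L Rinv ∘L cr ∘L Al ∘L R)
          ∘L adjoint Al).IsPositive ∧
      (Al ∘L (R - R ∘L adjoint Al ∘L adjoint cr ∘L Rinv ∘L cr ∘L Al ∘L R)
          ∘L adjoint Al) ∘L Linv = 1 ∧
      Linv ∘L (Al ∘L (R - R ∘L adjoint Al ∘L adjoint cr ∘L Rinv ∘L cr ∘L Al ∘L R)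
          ∘L adjoint Al) = 1 ∧
      Linv = adjoint cr ∘L cr + Al ∘L Rinv ∘L adjoint Al ∧
      Linv = 1 + adjoint cr ∘L cr -
        Al ∘L cr ∘L
          (Al ∘L (R - R ∘L adjoint Al ∘L adjoint cr ∘L Rinv ∘L cr ∘L Al ∘L R)
            ∘L adjoint Al) ∘L adjoint cr ∘L adjoint Al ∧
      cr ∘L (Al ∘L (R - R ∘L adjoint Al ∘L adjoint cr ∘L Rinv ∘L cr ∘L Al ∘L R)
          ∘L adjoint Al) = Rinv ∘L cr ∘L Al ∘L R ∘L adjoint Al := by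
  have u1 : ∀ {E : Type} [NormedAddCommGroup E] [NormedSpace ℂ E]
      (W : E →L[ℂ] K), Al ∘L (adjoint Al ∘L W) = W := by
    intro E _ _ W
    rw [← ContinuousLinearMap.comp_assoc, hAlU₁, ContinuousLinearMap.one_def,
      ContinuousLinearMap.id_comp]
  have u2 : ∀ {E : Type} [NormedAddCommGroup E] [NormedSpace ℂ E]
      (W : E →L[ℂ] H), adjoint Al ∘L (Al ∘L W) = W := by
    intro E _ _ W
    rw [← ContinuousLinearMap.comp_assoc, hAlU₂, ContinuousLinearMap.one_def,
      ContinuousLinearMap.id_comp]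
  have r1 : ∀ {E : Type} [NormedAddCommGroup E] [NormedSpace ℂ E]
      (W : E →L[ℂ] H), R ∘L (Rinv ∘L W) = W := by
    intro E _ _ W
    rw [← ContinuousLinearMap.comp_assoc, hRinv₁, ContinuousLinearMap.one_def,
      ContinuousLinearMap.id_comp]
  have r2 : ∀ {E : Type} [NormedAddCommGroup E] [NormedSpace ℂ E]
      (W : E →L[ℂ] H), Rinv ∘L (R ∘L W) = W := by
    intro E _ _ W
    rw [← ContinuousLinearMap.comp_assoc, hRinv₂, ContinuousLinearMap.one_def,
      ContinuousLinearMap.id_comp]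
  have hk0 : cr ∘L (Al ∘L R ∘L adjoint Al) ∘L adjoint cr = R - 1 := by
    conv_rhs => rw [hRid]
    abel
  have key : ∀ {E : Type} [NormedAddCommGroup E] [NormedSpace ℂ E]
      (W : E →L[ℂ] H),
      cr ∘L (Al ∘L (R ∘L (adjoint Al ∘L (adjoint cr ∘L W)))) = R ∘L W - W := by
    intro E _ _ W
    have h := congrArg (fun Z : H →L[ℂ] H => Z ∘L W) hk0
    simpa [ContinuousLinearMap.comp_assoc, ContinuousLinearMap.sub_comp,
      ContinuousLinearMap.one_def, ContinuousLinearMap.id_comp] using h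
  have keyt : cr ∘L (Al ∘L (R ∘L (adjoint Al ∘L adjoint cr))) = R - 1 := by
    simpa [ContinuousLinearMap.comp_assoc] using hk0
  have hRR : R * Rinv = 1 := hRinv₁
  have hRinvsa : star Rinv = Rinv := by
    have h3 : star Rinv * R = 1 := by
      rw [← hRsa, ← star_mul, hRR, star_one]
    calc star Rinv = (star Rinv * R) * Rinv := by rw [mul_assoc, hRR, mul_one]
      _ = Rinv := by rw [h3, one_mul]
  set L : K →L[ℂ] K :=
    Al ∘L (R - R ∘L adjoint Al ∘L adjoint cr ∘L Rinv ∘L cr ∘L Al ∘L R)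
      ∘L adjoint Al with hLdef
  set Linv : K →L[ℂ] K :=
    adjoint cr ∘L cr + Al ∘L Rinv ∘L adjoint Al with hLinvdef
  have hLL : L ∘L Linv = 1 := by
    rw [hLdef, hLinvdef]
    simp only [ContinuousLinearMap.comp_assoc, ContinuousLinearMap.comp_sub,
      ContinuousLinearMap.sub_comp, ContinuousLinearMap.comp_add,
      ContinuousLinearMap.add_comp, ContinuousLinearMap.one_def,
      ContinuousLinearMap.id_comp, ContinuousLinearMap.comp_id,
      hAlU₁, hAlU₂, hRinv₁, hRinv₂,
      u1, u2, r1, r2, key, keyt] <;> abel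
  have hLL' : Linv ∘L L = 1 := by
    rw [hLdef, hLinvdef]
    simp only [ContinuousLinearMap.comp_assoc, ContinuousLinearMap.comp_sub,
      ContinuousLinearMap.sub_comp, ContinuousLinearMap.comp_add,
      ContinuousLinearMap.add_comp, ContinuousLinearMap.one_def,
      ContinuousLinearMap.id_comp, ContinuousLinearMap.comp_id,
      hAlU₁, hAlU₂, hRinv₁, hRinv₂,
      u1, u2, r1, r2, key, keyt] <;> abel
  have hcrL : cr ∘L L = Rinv ∘L cr ∘L Al ∘L R ∘L adjoint Al := by
    rw [hLdef]
    simp only [ContinuousLinearMap.comp_assoc, ContinuousLinearMap.comp_sub,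
      ContinuousLinearMap.sub_comp, ContinuousLinearMap.one_def,
      ContinuousLinearMap.id_comp, ContinuousLinearMap.comp_id,
      hAlU₁, hAlU₂, hRinv₁, hRinv₂,
      u1, u2, r1, r2, key, keyt] <;> abel
  have hLinv2 : Linv = 1 + adjoint cr ∘L cr -
      Al ∘L cr ∘L L ∘L adjoint cr ∘L adjoint Al := by
    rw [hLinvdef, hLdef]
    simp only [ContinuousLinearMap.comp_assoc, ContinuousLinearMap.comp_sub,
      ContinuousLinearMap.sub_comp, ContinuousLinearMap.comp_add,
      ContinuousLinearMap.add_comp, ContinuousLinearMap.one_def,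
      ContinuousLinearMap.id_comp, ContinuousLinearMap.comp_id,
      hAlU₁, hAlU₂, hRinv₁, hRinv₂,
      u1, u2, r1, r2, key, keyt] <;> abel
  have hRpos : R.IsPositive := by
    have := ContinuousLinearMap.isPositive_one.add hRgeI
    simpa using this
  have hRinvpos : Rinv.IsPositive := by
    have h := hRpos.conj_adjoint Rinv
    rwa [← ContinuousLinearMap.star_eq_adjoint, hRinvsa,
      ← ContinuousLinearMap.comp_assoc, hRinv₂, ContinuousLinearMap.one_def,
      ContinuousLinearMap.id_comp] at h
  have hcrpos : (adjoint cr ∘L cr).IsPositive := by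
    have h := ContinuousLinearMap.isPositive_one.adjoint_conj cr
    simpa [ContinuousLinearMap.one_def] using h
  have hLinvpos : Linv.IsPositive := by
    rw [hLinvdef]
    exact hcrpos.add (hRinvpos.conj_adjoint Al)
  have hLinvsa : star Linv = Linv := hLinvpos.isSelfAdjoint
  have hLsa : star L = L := by
    have h1 : star L * star Linv = 1 := by
      rw [← star_mul, ContinuousLinearMap.mul_def Linv L, hLL', star_one]
    calc star L = (star L * star Linv) * L := by
          rw [hLinvsa, mul_assoc, ContinuousLinearMap.mul_def Linv L, hLL', mul_one]
      _ = L := by rw [h1, one_mul]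
  have hLpos : L.IsPositive := by
    have h := hLinvpos.adjoint_conj L
    rwa [← ContinuousLinearMap.star_eq_adjoint, hLsa,
      ← ContinuousLinearMap.comp_assoc, hLL, ContinuousLinearMap.one_def,
      ContinuousLinearMap.id_comp] at h
  exact ⟨Linv, hLpos, hLL, hLL', hLinvdef, hLinv2, hcrL⟩

set_option maxHeartbeats 1000000 in
set_option synthInstance.maxHeartbeats 400000 in
/-- Let `c ∈ B(T)`, `R_c = Σ_{n≥0}(cα)ⁿ(α*c*)ⁿ` (invertible,
with `R_c = I + c(αR_cα*)c*` and `R_c ≥ I`), and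
`L_c = α(R_c − R_c α* c* R_c⁻¹ c α R_c)α*`.  Then `L_c > 0`,
`L_c⁻¹ = c*c + α R_c⁻¹ α* = I + c*c − αcL_c c*α*`, and
`cL_c = R_c⁻¹ c α R_c α*`.  Here `Al` is the unitary column of the primitive
shifts and `cr` the row operator `g ↦ Σⱼ cⱼ gⱼ`, so that `cα = cr ∘ Al`. -/
theorem Lc_properties {q : ℕ} (hq : 1 ≤ q) {T : Type} [DecidableEq T]
    (S : HomTree q T) (A : Fin q → (L2 T →L[ℂ] L2 T))
    (hA : ∀ (j : Fin q) (f : L2 T) (t : T), A j f t = f (S.shift j t))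
    (Al : L2 T →L[ℂ] L2q q T)
    (hAl : ∀ (f : L2 T) (j : Fin q), Al f j = A j f)
    (hAlU₁ : Al ∘L adjoint Al = 1) (hAlU₂ : adjoint Al ∘L Al = 1)
    (c : Fin q → (L2 T →L[ℂ] L2 T)) (hc : ∀ j, IsConst S (c j))
    (cr : L2q q T →L[ℂ] L2 T)
    (hcr : ∀ g : L2q q T, cr g = ∑ j, c j (g j))
    (hrad : spectralRadius ℂ (cr ∘L Al) < 1)
    (R Rinv : L2 T →L[ℂ] L2 T)
    (hR : HasSum (fun n : ℕ =>
      ((cr ∘L Al) ^ n) ∘L ((adjoint (cr ∘L Al)) ^ n)) R)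
    (hRid : R = 1 + cr ∘L (Al ∘L R ∘L adjoint Al) ∘L adjoint cr)
    (hRgeI : (R - 1).IsPositive)
    (hRinv₁ : R ∘L Rinv = 1) (hRinv₂ : Rinv ∘L R = 1) :
    ∃ Linv : L2q q T →L[ℂ] L2q q T,
      (Al ∘L (R - R ∘L adjoint Al ∘L adjoint cr ∘L Rinv ∘L cr ∘L Al ∘L R)
          ∘L adjoint Al).IsPositive ∧
      (Al ∘L (R - R ∘L adjoint Al ∘L adjoint cr ∘L Rinv ∘L cr ∘L Al ∘L R)
          ∘L adjoint Al) ∘L Linv = 1 ∧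
      Linv ∘L (Al ∘L (R - R ∘L adjoint Al ∘L adjoint cr ∘L Rinv ∘L cr ∘L Al ∘L R)
          ∘L adjoint Al) = 1 ∧
      Linv = adjoint cr ∘L cr + Al ∘L Rinv ∘L adjoint Al ∧
      Linv = 1 + adjoint cr ∘L cr -
        Al ∘L cr ∘L
          (Al ∘L (R - R ∘L adjoint Al ∘L adjoint cr ∘L Rinv ∘L cr ∘L Al ∘L R)
            ∘L adjoint Al) ∘L adjoint cr ∘L adjoint Al ∧
      cr ∘L (Al ∘L (R - R ∘L adjoint Al ∘L adjoint cr ∘L Rinv ∘L cr ∘L Al ∘L R)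
          ∘L adjoint Al) = Rinv ∘L cr ∘L Al ∘L R ∘L adjoint Al := by
  have hRsa : star R = R := by
    have h1 := hR.star
    have h2 : (fun n : ℕ => star (((cr ∘L Al) ^ n) ∘L ((adjoint (cr ∘L Al)) ^ n)))
        = fun n : ℕ => ((cr ∘L Al) ^ n) ∘L ((adjoint (cr ∘L Al)) ^ n) := by
      funext n
      rw [← ContinuousLinearMap.mul_def, star_mul, star_pow, star_pow,
        ContinuousLinearMap.star_eq_adjoint, ContinuousLinearMap.star_eq_adjoint,
        ContinuousLinearMap.adjoint_adjoint, ContinuousLinearMap.mul_def]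
    exact (h2 ▸ h1).unique hR
  exact aux_Lc Al cr R Rinv hAlU₁ hAlU₂ hRid hRsa hRgeI hRinv₁ hRinv₂

end Multiscale
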